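/- Let Ω ∈ ℝ^{n×d}, B ∈ ℝ^{m₂×d}, p ≥ 1, and β, γ ≥ 0. Suppose that for every z ∈ ℝ^d and every ε ≥ 0, ‖Bz‖₂ ≤ ε implies ‖z‖₂ ≤ β‖Ωz‖_p + γε. Let x ∈ ℝ^d, e₂ ∈ ℝ^{m₂}, y₂ = Bx + e₂, let ŵ ∈ ℝ^n be arbitrary, and let x̂ be a minimizer of ‖Ω x̃ − ŵ‖_p over all x̃ ∈ ℝ^d satisfying ‖B x̃ − y₂‖₂ ≤ ‖e₂‖₂. Then ‖B(x̂ − x)‖₂ ≤ 2‖e₂‖₂, ‖Ω(x̂ − x)‖_p ≤ 2‖Ωx − ŵ‖_p, and consequently ‖x̂ − x‖₂ ≤ 2β‖Ωx − ŵ‖_p + 2γ‖e₂‖₂. -/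
import Mathlib


open Matrix

/-- The Euclidean (ℓ₂) norm of a finitely-indexed real vector. -/
noncomputable def l2norm {ι : Type*} [Fintype ι] (v : ι → ℝ) : ℝ :=
  Real.sqrt (∑ i, v i ^ 2)

/-- The ℓ_p norm of a finitely-indexed real vector. -/
noncomputable def lpnorm {ι : Type*} [Fintype ι] (p : ℝ) (v : ι → ℝ) : ℝ :=
  (∑ i, |v i| ^ p) ^ (1 / p)


lemma lpnorm_nonneg {ι : Type*} [Fintype ι] (p : ℝ) (v : ι → ℝ) : 0 ≤ lpnorm p v := by
  apply Real.rpow_nonneg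
  exact Finset.sum_nonneg fun i _ => Real.rpow_nonneg (abs_nonneg _) _

lemma lpnorm_neg {ι : Type*} [Fintype ι] (p : ℝ) (v : ι → ℝ) : lpnorm p (-v) = lpnorm p v := by
  simp [lpnorm]

lemma lpnorm_add_le {ι : Type*} [Fintype ι] {p : ℝ} (hp : 1 ≤ p) (u v : ι → ℝ) :
    lpnorm p (u + v) ≤ lpnorm p u + lpnorm p v := by
  simpa [lpnorm] using Real.Lp_add_le Finset.univ u v hp

lemma l2norm_eq_lpnorm {ι : Type*} [Fintype ι] (v : ι → ℝ) : l2norm v = lpnorm 2 v := by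
  unfold l2norm lpnorm
  rw [Real.sqrt_eq_rpow]
  congr 1
  apply Finset.sum_congr rfl
  intro i _
  rw [show (2:ℝ) = ((2:ℕ):ℝ) by norm_num, Real.rpow_natCast, sq_abs]

lemma l2norm_nonneg {ι : Type*} [Fintype ι] (v : ι → ℝ) : 0 ≤ l2norm v :=
  Real.sqrt_nonneg _

lemma l2norm_neg {ι : Type*} [Fintype ι] (v : ι → ℝ) : l2norm (-v) = l2norm v := by
  simp [l2norm]

lemma l2norm_add_le {ι : Type*} [Fintype ι] (u v : ι → ℝ) :
    l2norm (u + v) ≤ l2norm u + l2norm v := by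
  simp only [l2norm_eq_lpnorm]
  exact lpnorm_add_le one_le_two u v
/-- constrained-minimization step: from transform-domain
proximity to signal-domain proximity. -/
theorem stmt_8 {n d m₂ : ℕ} (p : ℝ) (hp : 1 ≤ p)
    (Ω : Matrix (Fin n) (Fin d) ℝ) (B : Matrix (Fin m₂) (Fin d) ℝ)
    (β γ : ℝ) (hβ : 0 ≤ β) (hγ : 0 ≤ γ)
    (hB : ∀ (z : Fin d → ℝ) (ε : ℝ), 0 ≤ ε → l2norm (B.mulVec z) ≤ ε →
      l2norm z ≤ β * lpnorm p (Ω.mulVec z) + γ * ε)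
    (x : Fin d → ℝ) (e₂ : Fin m₂ → ℝ)
    (y₂ : Fin m₂ → ℝ) (hy₂ : y₂ = B.mulVec x + e₂)
    (wHat : Fin n → ℝ)
    (xHat : Fin d → ℝ)
    (hfeas : l2norm (B.mulVec xHat - y₂) ≤ l2norm e₂)
    (hmin : ∀ xTil : Fin d → ℝ, l2norm (B.mulVec xTil - y₂) ≤ l2norm e₂ →
      lpnorm p (Ω.mulVec xHat - wHat) ≤ lpnorm p (Ω.mulVec xTil - wHat)) :
    l2norm (B.mulVec (xHat - x)) ≤ 2 * l2norm e₂ ∧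
    lpnorm p (Ω.mulVec (xHat - x)) ≤ 2 * lpnorm p (Ω.mulVec x - wHat) ∧
    l2norm (xHat - x) ≤ 2 * β * lpnorm p (Ω.mulVec x - wHat) + 2 * γ * l2norm e₂ := by
  have hBsplit : B.mulVec (xHat - x) = (B.mulVec xHat - y₂) + e₂ := by
    rw [Matrix.mulVec_sub, hy₂]; abel
  have h1 : l2norm (B.mulVec (xHat - x)) ≤ 2 * l2norm e₂ := by
    rw [hBsplit]
    calc l2norm ((B.mulVec xHat - y₂) + e₂)
        ≤ l2norm (B.mulVec xHat - y₂) + l2norm e₂ := l2norm_add_le _ _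
      _ ≤ l2norm e₂ + l2norm e₂ := by linarith
      _ = 2 * l2norm e₂ := by ring
  have hxfeas : l2norm (B.mulVec x - y₂) ≤ l2norm e₂ := by
    have : B.mulVec x - y₂ = -e₂ := by rw [hy₂]; abel
    rw [this, l2norm_neg]
  have hminx := hmin x hxfeas
  have h2 : lpnorm p (Ω.mulVec (xHat - x)) ≤ 2 * lpnorm p (Ω.mulVec x - wHat) := by
    have hsplit : Ω.mulVec (xHat - x) = (Ω.mulVec xHat - wHat) + -(Ω.mulVec x - wHat) := by
      rw [Matrix.mulVec_sub]; abel
    rw [hsplit]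
    calc lpnorm p ((Ω.mulVec xHat - wHat) + -(Ω.mulVec x - wHat))
        ≤ lpnorm p (Ω.mulVec xHat - wHat) + lpnorm p (-(Ω.mulVec x - wHat)) :=
          lpnorm_add_le hp _ _
      _ = lpnorm p (Ω.mulVec xHat - wHat) + lpnorm p (Ω.mulVec x - wHat) := by
          rw [lpnorm_neg]
      _ ≤ 2 * lpnorm p (Ω.mulVec x - wHat) := by linarith
  refine ⟨h1, h2, ?_⟩
  have h3 := hB (xHat - x) (2 * l2norm e₂)
    (by have := l2norm_nonneg e₂; linarith) h1
  have := mul_le_mul_of_nonneg_left h2 hβ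
  linarith
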